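/- Fix integers 0 < n₁ ≤ n₂ ≤ … ≤ n_m. If (i,j), (i',j') ∈ Sc_n̄ and (i,j) ⪰ (i',j') (i.e. i ≥ i' and j ≤ j'), then hb(d̄)_i ≥ hb(d̄)_{i'} for every n̄-admissible composition d̄ ∈ Z_{≥0}^m. -/

import Mathlib

/-- A composition of length `nn` is encoded as a function `ℕ → ℕ` vanishing from
index `nn` on (0-based indexing).  `IsSerpentine nn d lam mu` says that
`mu ∈ Ser^nn_{d,lam}` is a `d`-serpentine associated with `lam`. -/
def IsSerpentine (nn d : ℕ) (lam mu : ℕ → ℕ) : Prop :=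
  (∀ i, nn ≤ i → lam i = 0) ∧
  (∀ i, nn ≤ i → mu i = 0) ∧
  (∀ i, lam i ≤ mu i) ∧
  (∑ i ∈ Finset.range nn, (mu i - lam i)) = d ∧
  (∀ i j, i < j → j < nn → lam i ≤ lam j → mu i ≤ lam j) ∧
  (∀ i j, i < j → j < nn → lam j < lam i → lam i ≤ mu j → mu i = lam i)

/-- `domSum f s` is the sum of the `s` largest entries of a (finitely supported)
function `f : ℕ → ℕ`, i.e. the `s`-th partial sum of the dominant part `f₊`. -/
noncomputable def domSum (f : ℕ → ℕ) (s : ℕ) : ℕ :=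
  sSup ((fun T : Finset ℕ => ∑ i ∈ T, f i) '' {T : Finset ℕ | T.card ≤ s})

/-- `f₊ = g₊`: the dominant parts (non-increasing reorderings, padded by trailing
zeros) of the finitely supported functions `f` and `g` coincide. -/
def DomEq (f g : ℕ → ℕ) : Prop := ∀ s, domSum f s = domSum g s

/-- `f₊ ≤ g₊` in the dominance order: `|f| = |g|` and every partial sum of the
dominant part of `g` is at least the corresponding one for `f`. -/
def DomLE (f g : ℕ → ℕ) : Prop :=
  (∀ s, domSum f s ≤ domSum g s) ∧ ∃ N, ∀ s, N ≤ s → domSum f s = domSum g s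

/-- The composition `(λ, d)`: append the entry `d` to a length-`n` composition. -/
def appendComp (n : ℕ) (lam : ℕ → ℕ) (d : ℕ) : ℕ → ℕ :=
  fun i => if i < n then lam i else if i = n then d else 0

/-- The composition `(d₁, …, d_m)`: truncate `d` to its first `m` entries. -/
def truncComp (m : ℕ) (d : ℕ → ℕ) : ℕ → ℕ := fun i => if i < m then d i else 0

/-- A chain of iterated serpentines `μ⁽⁰⁾ = (0)`, `μ⁽ʲ⁾ ∈ Ser^{n_j}_{d_j, μ⁽ʲ⁻¹⁾}`. -/
def SerpChain (n : ℕ → ℕ) (m : ℕ) (d : ℕ → ℕ) (μ : ℕ → ℕ → ℕ) : Prop :=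
  (∀ i, μ 0 i = 0) ∧ ∀ j, j < m → IsSerpentine (n j) (d j) (μ j) (μ (j + 1))

/-- `d̄ ∈ Z_{≥0}^m` is `n̄`-admissible: for each `s < m` the number of nonzero
entries among `d_0, …, d_s` is at most `n_s`. -/
def NAdmissible (n : ℕ → ℕ) (m : ℕ) (d : ℕ → ℕ) : Prop :=
  ∀ s, s < m → ((Finset.range (s + 1)).filter (fun j => d j ≠ 0)).card ≤ n s

/-- Cells are pairs `(i, j)` (row `i`, column `j`, both 0-based); the Young diagram
`Y_n̄` consists of the cells with `j < m` and `i < n j`.  `IsSCorner n m Rr Rc c`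
says that, after removing the rows in `Rr` and the columns in `Rc` from `Y_n̄`,
the cell `c` is a corner of the remaining (renumbered) Young diagram: it is the
lowest remaining cell of its column and the leftmost remaining cell of its row. -/
def IsSCorner (n : ℕ → ℕ) (m : ℕ) (Rr Rc : Set ℕ) (c : ℕ × ℕ) : Prop :=
  c.2 < m ∧ c.1 < n c.2 ∧ c.1 ∉ Rr ∧ c.2 ∉ Rc ∧
  (∀ i, c.1 < i → i < n c.2 → i ∈ Rr) ∧
  (∀ j, j < c.2 → j ∉ Rc → n j ≤ c.1)

/-- An execution of the thin-hook removal process on `Y_n̄`: a list of cells, each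
of which is a corner of the diagram remaining after deleting the rows and columns
of the previously recorded cells, such that at the end every cell of `Y_n̄` lies
in a removed row or in a removed column (the diagram is empty). -/
def IsExec (n : ℕ → ℕ) (m : ℕ) (l : List (ℕ × ℕ)) : Prop :=
  (∀ t (ht : t < l.length),
    IsSCorner n m {i | ∃ c ∈ l.take t, c.1 = i} {j | ∃ c ∈ l.take t, c.2 = j}
      (l.get ⟨t, ht⟩)) ∧
  (∀ i j, j < m → i < n j → (∃ c ∈ l, c.1 = i) ∨ (∃ c ∈ l, c.2 = j))

/-- `S` is the set of staircase corners of `Y_n̄`: the recorded set of some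
execution of the thin-hook removal process. -/
def IsScSet (n : ℕ → ℕ) (m : ℕ) (S : Set (ℕ × ℕ)) : Prop :=
  ∃ l : List (ℕ × ℕ), IsExec n m l ∧ S = {c | c ∈ l}

/-- The partial order on staircase corners: `(i,j) ⪯ (i',j')` iff `i ≤ i'` and
`j' ≤ j` (to increase, move down and to the left). -/
def ScLE (c c' : ℕ × ℕ) : Prop := c.1 ≤ c'.1 ∧ c'.2 ≤ c.2

/-- A DL-dense array: an array supported on the staircase corners `S` which is
order-preserving for the staircase-corner order. -/
def DLDense (S : Set (ℕ × ℕ)) (R : ℕ × ℕ → ℕ) : Prop :=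
  (∀ c, c ∉ S → R c = 0) ∧ ∀ c c', c ∈ S → c' ∈ S → ScLE c c' → R c ≤ R c'

/-- Vertical weight of an array: the sum of the entries in column `j`. -/
def vrtW (n : ℕ → ℕ) (R : ℕ × ℕ → ℕ) (j : ℕ) : ℕ := ∑ i ∈ Finset.range (n j), R (i, j)

/-- Horizontal weight of an array: the sum of the entries in row `i`. -/
def horW (m : ℕ) (R : ℕ × ℕ → ℕ) (i : ℕ) : ℕ := ∑ j ∈ Finset.range m, R (i, j)

section Aux

variable {n : ℕ → ℕ} {m : ℕ} {l : List (ℕ × ℕ)}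

lemma mem_take_of_lt {α : Type*} {l : List α} {t tp : ℕ} (ht : t < l.length) (h : t < tp) :
    l.get ⟨t, ht⟩ ∈ l.take tp := by
  rw [List.mem_take_iff_getElem]
  exact ⟨t, by omega, by simp⟩

lemma exists_of_mem_take {α : Type*} {l : List α} {tp : ℕ} {c : α} (h : c ∈ l.take tp) :
    ∃ s, ∃ hs : s < l.length, s < tp ∧ l.get ⟨s, hs⟩ = c := by
  rw [List.mem_take_iff_getElem] at h
  obtain ⟨s, hs, he⟩ := h
  exact ⟨s, by omega, by omega, by simpa using he⟩

/-- Cells at different positions have different rows. -/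
lemma exec_row_ne (hex : IsExec n m l) {t t' : ℕ} (ht : t < l.length) (ht' : t' < l.length)
    (htt : t < t') : (l.get ⟨t, ht⟩).1 ≠ (l.get ⟨t', ht'⟩).1 := by
  intro h
  exact ((hex.1 t' ht').2.2.1) ⟨l.get ⟨t, ht⟩, mem_take_of_lt ht htt, h⟩

/-- Cells at different positions have different columns. -/
lemma exec_col_ne (hex : IsExec n m l) {t t' : ℕ} (ht : t < l.length) (ht' : t' < l.length)
    (htt : t < t') : (l.get ⟨t, ht⟩).2 ≠ (l.get ⟨t', ht'⟩).2 := by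
  intro h
  exact ((hex.1 t' ht').2.2.2.1) ⟨l.get ⟨t, ht⟩, mem_take_of_lt ht htt, h⟩

lemma exec_get_inj (hex : IsExec n m l) {t t' : ℕ} (ht : t < l.length) (ht' : t' < l.length)
    (h : l.get ⟨t, ht⟩ = l.get ⟨t', ht'⟩) : t = t' := by
  rcases lt_trichotomy t t' with hc | hc | hc
  · exact absurd (congrArg Prod.fst h) (exec_row_ne hex ht ht' hc)
  · exact hc
  · exact absurd (congrArg Prod.fst h).symm (exec_row_ne hex ht' ht hc)

/-- Two recorded cells with the same row coincide. -/
lemma exec_row_inj (hex : IsExec n m l) {c c' : ℕ × ℕ} (hc : c ∈ l) (hc' : c' ∈ l)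
    (h : c.1 = c'.1) : c = c' := by
  obtain ⟨t, ht, rfl⟩ := List.mem_iff_get.mp hc
  obtain ⟨t', ht', rfl⟩ := List.mem_iff_get.mp hc'
  rcases lt_trichotomy (t : ℕ) (t' : ℕ) with hlt | heq | hlt
  · exact absurd h (exec_row_ne hex t.2 t'.2 hlt)
  · congr 1; exact Fin.ext heq
  · exact absurd h.symm (exec_row_ne hex t'.2 t.2 hlt)

/-- Two recorded cells with the same column coincide. -/
lemma exec_col_inj (hex : IsExec n m l) {c c' : ℕ × ℕ} (hc : c ∈ l) (hc' : c' ∈ l)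
    (h : c.2 = c'.2) : c = c' := by
  obtain ⟨t, ht, rfl⟩ := List.mem_iff_get.mp hc
  obtain ⟨t', ht', rfl⟩ := List.mem_iff_get.mp hc'
  rcases lt_trichotomy (t : ℕ) (t' : ℕ) with hlt | heq | hlt
  · exact absurd h (exec_col_ne hex t.2 t'.2 hlt)
  · congr 1; exact Fin.ext heq
  · exact absurd h.symm (exec_col_ne hex t'.2 t.2 hlt)

lemma exec_mem_m (hex : IsExec n m l) {c : ℕ × ℕ} (hc : c ∈ l) : c.2 < m := by
  obtain ⟨t, ht, rfl⟩ := List.mem_iff_get.mp hc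
  exact (hex.1 t t.2).1

lemma exec_mem_n (hex : IsExec n m l) {c : ℕ × ℕ} (hc : c ∈ l) : c.1 < n c.2 := by
  obtain ⟨t, ht, rfl⟩ := List.mem_iff_get.mp hc
  exact (hex.1 t t.2).2.1

/-- Key fact 1: every row strictly between a corner and the top of its column is the
row of a corner in a strictly smaller column. -/
lemma exec_above (hex : IsExec n m l) {c : ℕ × ℕ} (hc : c ∈ l) {i : ℕ}
    (h1 : c.1 < i) (h2 : i < n c.2) : ∃ c' ∈ l, c'.1 = i ∧ c'.2 < c.2 := by
  obtain ⟨⟨t, ht⟩, hget⟩ := List.mem_iff_get.mp hc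
  have hcorner := hex.1 t ht
  rw [hget] at hcorner
  obtain ⟨c'', hc''take, hc''i⟩ := hcorner.2.2.2.2.1 i h1 h2
  obtain ⟨t'', ht'', htt'', hget''⟩ := exists_of_mem_take hc''take
  have hc''l : c'' ∈ l := hget'' ▸ List.get_mem l ⟨t'', ht''⟩
  refine ⟨c'', hc''l, hc''i, ?_⟩
  have hne : c''.2 ≠ c.2 := by
    intro he
    have := exec_col_inj hex hc''l hc he
    rw [this] at hc''i; omega
  rcases lt_or_gt_of_ne hne with hlt | hgt
  · exact hlt
  · exfalso
    have hcorner'' := hex.1 t'' ht''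
    rw [hget''] at hcorner''
    have hnot : c.2 ∉ {j | ∃ cc ∈ l.take t'', cc.2 = j} := by
      rintro ⟨cc, hcctake, hcc2⟩
      obtain ⟨s, hs, hst, hgets⟩ := exists_of_mem_take hcctake
      have hccl : cc ∈ l := hgets ▸ List.get_mem l ⟨s, hs⟩
      have hcceq : cc = c := exec_col_inj hex hccl hc hcc2
      have : s = t := exec_get_inj hex hs ht (by rw [hgets, hcceq, ← hget])
      omega
    have := hcorner''.2.2.2.2.2 c.2 hgt hnot
    rw [hc''i] at this; omega

/-- Key fact 2: if a corner lies in column `> jj` and its row is below the top of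
column `jj`, then column `jj` has a corner. -/
lemma exec_colcov (hex : IsExec n m l) {c : ℕ × ℕ} (hc : c ∈ l) {jj : ℕ}
    (h1 : jj < c.2) (h2 : c.1 < n jj) : ∃ c' ∈ l, c'.2 = jj := by
  obtain ⟨⟨t, ht⟩, hget⟩ := List.mem_iff_get.mp hc
  have hcorner := hex.1 t ht
  rw [hget] at hcorner
  by_contra hno
  push_neg at hno
  have hnot : jj ∉ {j | ∃ cc ∈ l.take (t : ℕ), cc.2 = j} := by
    intro ⟨cc, hcctake, hcc2⟩
    obtain ⟨s, hs, hst, hgets⟩ := exists_of_mem_take hcctake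
    exact hno cc (hgets ▸ List.get_mem l ⟨s, hs⟩) hcc2
  have := hcorner.2.2.2.2.2 jj h1 hnot
  omega

end Aux

/-- Lemma 1.24.  If `(i,j) ⪰ (i',j')` are staircase corners,
then `hb(d̄)_i ≥ hb(d̄)_{i'}` for every `n̄`-admissible composition `d̄`.  Here
`hb(d̄) = μ⁽ᵐ⁾` for the unique chain of iterated serpentines with
`μ⁽ᵐ⁾₊ = (d₁,…,d_m)₊`. -/
theorem hb_monotone_on_staircase_corners (m : ℕ) (hm : 0 < m)
    (n : ℕ → ℕ) (hn0 : 0 < n 0)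
    (hmono : ∀ j k, j ≤ k → k < m → n j ≤ n k)
    (S : Set (ℕ × ℕ)) (hS : IsScSet n m S)
    (i j i' j' : ℕ) (hc : (i, j) ∈ S) (hc' : (i', j') ∈ S)
    (hge : ScLE (i', j') (i, j))
    (d : ℕ → ℕ) (hdsupp : ∀ j, m ≤ j → d j = 0) (hadm : NAdmissible n m d)
    (μ : ℕ → ℕ → ℕ) (hchain : SerpChain n m d μ)
    (hdom : DomEq (μ m) (truncComp m d)) :
    μ m i' ≤ μ m i := by
  obtain ⟨l, hex, hSeq⟩ := hS
  rw [hSeq] at hc hc'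
  have hcl : (i, j) ∈ l := hc
  have hc'l : (i', j') ∈ l := hc'
  -- The joint invariant, proved by induction on the column index.
  have key : ∀ jj, jj ≤ m →
      (∀ r, (∀ c ∈ l, c.2 < jj → c.1 ≠ r) → μ jj r = 0) ∧
      (∀ c c' : ℕ × ℕ, c ∈ l → c' ∈ l → c.2 ≤ c'.2 → c'.2 < jj → c'.1 ≤ c.1 →
        μ jj c'.1 ≤ μ jj c.1) := by
    intro jj
    induction jj with
    | zero =>
      intro _
      exact ⟨fun r _ => hchain.1 r, fun c c' _ _ _ h _ => absurd h (Nat.not_lt_zero _)⟩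
    | succ jj ih =>
      intro hjm1
      have hjm : jj < m := hjm1
      obtain ⟨ih1, ih2⟩ := ih (le_of_lt hjm)
      have serp := hchain.2 jj hjm
      obtain ⟨s1, s2, s3, s4, s5, s6⟩ := serp
      constructor
      · -- support invariant
        intro r hr
        by_cases hrn : n jj ≤ r
        · exact s2 r hrn
        push_neg at hrn
        -- get a corner c₀ in column jj
        have hc0 : ∃ c₀ ∈ l, c₀.2 = jj := by
          rcases hex.2 r jj hjm hrn with ⟨c, hcl2, hci⟩ | ⟨c, hcl2, hcj⟩
          · rcases lt_trichotomy c.2 jj with h | h | h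
            · exact absurd hci (hr c hcl2 (by omega))
            · exact ⟨c, hcl2, h⟩
            · exact exec_colcov hex hcl2 h (by rw [hci]; exact hrn)
          · exact ⟨c, hcl2, hcj⟩
        obtain ⟨c₀, hc₀l, hc₀j⟩ := hc0
        rcases lt_trichotomy c₀.1 r with h | h | h
        · -- a corner with smaller column has row r : contradiction
          obtain ⟨c', hc'l2, hc'r, hc'col⟩ :=
            exec_above hex hc₀l h (by rw [hc₀j]; exact hrn)
          exact absurd hc'r (hr c' hc'l2 (by omega))
        · exact absurd h (hr c₀ hc₀l (by omega))
        · -- r below the corner of column jj : serpentine condition (iii)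
          have hr'n : c₀.1 < n jj := by
            have := exec_mem_n hex hc₀l
            rwa [hc₀j] at this
          have hlr' : μ jj c₀.1 = 0 := by
            apply ih1
            intro c hcl2 hcj2 hcr
            have : c = c₀ := exec_row_inj hex hcl2 hc₀l hcr
            rw [this, hc₀j] at hcj2; omega
          have hlr : μ jj r = 0 := by
            apply ih1
            intro c hcl2 hcj2
            exact hr c hcl2 (by omega)
          have := s5 r c₀.1 h hr'n (by rw [hlr]; exact Nat.zero_le _)
          omega
      · -- monotonicity invariant
        intro c c' hcl2 hc'l2 hcc' hc'j hrr'
        by_cases hre : c'.1 = c.1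
        · rw [hre]
        have hrlt : c'.1 < c.1 := by omega
        have hcn : c.1 < n jj :=
          lt_of_lt_of_le (exec_mem_n hex hcl2) (hmono c.2 jj (by omega) hjm)
        have hlam : μ jj c'.1 ≤ μ jj c.1 := by
          rcases lt_or_eq_of_le (Nat.lt_succ_iff.mp hc'j) with h | h
          · exact ih2 c c' hcl2 hc'l2 hcc' h hrr'
          · have : μ jj c'.1 = 0 := by
              apply ih1
              intro c₂ hc₂l hc₂j hc₂r
              have : c₂ = c' := exec_row_inj hex hc₂l hc'l2 hc₂r
              rw [this, h] at hc₂j; omega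
            rw [this]; exact Nat.zero_le _
        calc μ (jj + 1) c'.1 ≤ μ jj c.1 := s5 c'.1 c.1 hrlt hcn hlam
          _ ≤ μ (jj + 1) c.1 := s3 c.1
  have hj'm : j' < m := exec_mem_m hex hc'l
  exact (key m le_rfl).2 (i, j) (i', j') hcl hc'l hge.2 hj'm hge.1
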